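/- Let T be a bounded linear operator on a Hilbert space (or Banach space) such that 0 is in the residual spectrum of 𝐒 (so 𝐒* has an eigenvector g ≠ 0 with 𝐒*g = 0). If 0 < |z| < 1/ρ(𝐒) and (𝐒_{-1})* - zI is surjective, then there exists f ≠ 0 with ((1/z)I - 𝐒*)f = 0, contradicting 1/|z| > ρ(𝐒*) = ρ(𝐒); hence z ∈ σ((𝐒_{-1})*) and therefore z̄-type duality gives z ∈ σ(𝐒_{-1}). -/

import Mathlib

open scoped ENNReal

open Filter Topology
open scoped NNReal

/-- Suppose `𝐒₋₁𝐒 = I`, `0` is in the residual spectrum of `𝐒` (so `𝐒*` has an eigenvector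
`g ≠ 0` with `𝐒*g = 0`), and `0 < |z| < 1/ρ(𝐒)`. If `(𝐒₋₁)* - zI` is surjective, then there
exists `f ≠ 0` with `((1/z)I - 𝐒*)f = 0` (a contradiction with `1/|z| > ρ(𝐒)`); hence
`z ∈ σ(𝐒₋₁)`. -/
theorem backward_shift_spectrum_small_z {E : Type*} [NormedAddCommGroup E] [NormedSpace ℂ E]
    [CompleteSpace E] (S Sm : E →L[ℂ] E) (hid : ∀ x : E, Sm (S x) = x)
    (g : StrongDual ℂ E) (hg : g ≠ 0) (hSg : ∀ x : E, g (S x) = 0)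
    (z : ℂ) (hz0 : 0 < ‖z‖) (hz1 : (‖z‖₊ : ℝ≥0∞) < (spectralRadius ℂ S)⁻¹) :
    (Function.Surjective (fun f : StrongDual ℂ E => f.comp Sm - z • f) →
      ∃ f : StrongDual ℂ E, f ≠ 0 ∧ ∀ x : E, f (S x) = (1 / z) * f x) ∧
    z ∈ spectrum ℂ Sm := by
  have hzne : z ≠ 0 := by
    intro h; rw [h] at hz0; simp at hz0
  have part1 : Function.Surjective (fun f : StrongDual ℂ E => f.comp Sm - z • f) →
      ∃ f : StrongDual ℂ E, f ≠ 0 ∧ ∀ x : E, f (S x) = (1 / z) * f x := by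
    intro hsurj
    obtain ⟨f, hf⟩ := hsurj g
    simp only at hf
    have hfx : ∀ x : E, f (Sm x) - z * f x = g x := by
      intro x
      have := congrArg (fun u : StrongDual ℂ E => u x) hf
      simpa using this
    refine ⟨f, ?_, ?_⟩
    · intro hf0
      apply hg
      rw [hf0] at hf
      ext x
      have h0 := hfx x
      rw [hf0] at h0
      simpa using h0.symm
    · intro x
      have h1 := hfx (S x)
      rw [hid x, hSg x] at h1
      field_simp
      linear_combination -h1
  refine ⟨part1, ?_⟩
  by_contra hspec
  have hunit : IsUnit ((algebraMap ℂ (E →L[ℂ] E)) z - Sm) := spectrum.notMem_iff.mp hspec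
  obtain ⟨u, hu⟩ := hunit
  have hinv : ∀ x : E, (↑u⁻¹ : E →L[ℂ] E) (z • x - Sm x) = x := by
    intro x
    have h1 : (↑u⁻¹ * ↑u : E →L[ℂ] E) = 1 := u.inv_mul
    have h2 : (↑u : E →L[ℂ] E) x = z • x - Sm x := by
      rw [hu]; simp [Algebra.algebraMap_eq_smul_one]
    calc (↑u⁻¹ : E →L[ℂ] E) (z • x - Sm x) = (↑u⁻¹ : E →L[ℂ] E) ((↑u : E →L[ℂ] E) x) := by
          rw [h2]
      _ = ((↑u⁻¹ * ↑u : E →L[ℂ] E)) x := rfl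
      _ = x := by rw [h1]; rfl
  have hsurj : Function.Surjective (fun f : StrongDual ℂ E => f.comp Sm - z • f) := by
    intro h
    refine ⟨-(h.comp (↑u⁻¹ : E →L[ℂ] E)), ?_⟩
    ext x
    simp only [ContinuousLinearMap.sub_apply, ContinuousLinearMap.comp_apply,
      ContinuousLinearMap.smul_apply, ContinuousLinearMap.neg_apply, smul_eq_mul]
    have : h ((↑u⁻¹ : E →L[ℂ] E) (z • x - Sm x)) = h x := by rw [hinv x]
    simp only [map_sub, map_smul, smul_eq_mul] at this
    linear_combination this
  obtain ⟨f, hf0, hfS⟩ := part1 hsurj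
  -- iterate: f x = z ^ n * f ((S ^ n) x)
  have hpow : ∀ (n : ℕ) (x : E), f x = z ^ n * f ((S ^ n) x) := by
    intro n
    induction n with
    | zero => intro x; simp
    | succ n ih =>
      intro x
      have h1 : (S ^ (n + 1)) x = (S ^ n) (S x) := by
        rw [pow_succ]; rfl
      have h2 : f x = z * f (S x) := by
        have := hfS x
        field_simp at this
        linear_combination -this
      rw [h1, h2, ih (S x), pow_succ]
      ring
  have hfpos : (0 : ℝ) < ‖f‖ := norm_pos_iff.mpr hf0
  have hkey : ∀ n : ℕ, (1 : ℝ) ≤ ‖z‖ ^ n * ‖S ^ n‖ := by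
    intro n
    have hb : ‖f‖ ≤ (‖z‖ ^ n * ‖S ^ n‖) * ‖f‖ := by
      rw [show (‖z‖ ^ n * ‖S ^ n‖) * ‖f‖ = (‖z‖ ^ n * ‖S ^ n‖ * ‖f‖) from rfl]
      refine f.opNorm_le_bound (by positivity) (fun x => ?_)
      calc ‖f x‖ = ‖z‖ ^ n * ‖f ((S ^ n) x)‖ := by
            rw [hpow n x]; rw [norm_mul, norm_pow]
        _ ≤ ‖z‖ ^ n * (‖f‖ * (‖S ^ n‖ * ‖x‖)) := by
            gcongr
            exact (f.le_opNorm _).trans (by gcongr; exact (S ^ n).le_opNorm x)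
        _ = ‖z‖ ^ n * ‖S ^ n‖ * ‖f‖ * ‖x‖ := by ring
    nlinarith
  -- translate to ℝ≥0∞ and use Gelfand's formula
  have hstep : ∀ n : ℕ, n ≥ 1 → ((‖z‖₊ : ℝ≥0∞))⁻¹ ≤ (‖S ^ n‖₊ : ℝ≥0∞) ^ (1 / (n : ℝ)) := by
    intro n hn
    have hzpos : (0 : ℝ≥0) < ‖z‖₊ := by simpa using hz0
    have hnn : ((‖z‖₊)⁻¹ : ℝ≥0) ^ n ≤ ‖S ^ n‖₊ := by
      rw [← NNReal.coe_le_coe]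
      push_cast
      rw [inv_pow]
      rw [inv_le_iff_one_le_mul₀ (by positivity)]
      linarith [hkey n, mul_comm (‖z‖ ^ n) ‖S ^ n‖]
    have hc : (((‖z‖₊ : ℝ≥0∞))⁻¹) ^ n ≤ (‖S ^ n‖₊ : ℝ≥0∞) := by
      rw [← ENNReal.coe_inv (ne_of_gt hzpos), ← ENNReal.coe_pow]
      exact_mod_cast hnn
    have hne : (n : ℝ) ≠ 0 := Nat.cast_ne_zero.mpr (by omega)
    calc ((‖z‖₊ : ℝ≥0∞))⁻¹
        = ((((‖z‖₊ : ℝ≥0∞))⁻¹) ^ (n : ℕ)) ^ (1 / (n : ℝ)) := by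
          rw [← ENNReal.rpow_natCast _ n, ← ENNReal.rpow_mul, mul_one_div, div_self hne,
            ENNReal.rpow_one]
      _ ≤ (‖S ^ n‖₊ : ℝ≥0∞) ^ (1 / (n : ℝ)) :=
          ENNReal.rpow_le_rpow hc (by positivity)
  have htend := spectrum.pow_nnnorm_pow_one_div_tendsto_nhds_spectralRadius S
  have hle : ((‖z‖₊ : ℝ≥0∞))⁻¹ ≤ spectralRadius ℂ S :=
    ge_of_tendsto htend (Filter.eventually_atTop.mpr ⟨1, fun n hn => hstep n hn⟩)
  have : (spectralRadius ℂ S)⁻¹ ≤ (‖z‖₊ : ℝ≥0∞) := by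
    calc (spectralRadius ℂ S)⁻¹ ≤ (((‖z‖₊ : ℝ≥0∞))⁻¹)⁻¹ := ENNReal.inv_le_inv.mpr hle
      _ = (‖z‖₊ : ℝ≥0∞) := inv_inv _
  exact absurd (lt_of_lt_of_le hz1 this) (lt_irrefl _)
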